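/- If a continuous chain map φ: A• → B• of complexes of abelian topological groups is quasi-open, then for every n the induced map on cohomology H^n(A•) → H^n(B•) is open, where cohomology groups carry the quotient topology (cocycles with subspace topology modulo coboundaries). -/

import Mathlib

/-- A (ℤ-graded) cochain complex of abelian topological groups with continuous
differentials. -/
structure TopComplex where
  X : ℤ → Type
  [grp : ∀ n, AddCommGroup (X n)]
  [top : ∀ n, TopologicalSpace (X n)]
  [tgrp : ∀ n, IsTopologicalAddGroup (X n)]
  d : ∀ n, X n →+ X (n + 1)
  d_cont : ∀ n, Continuous (d n)
  d_comp_d : ∀ n x, d (n + 1) (d n x) = 0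

attribute [instance] TopComplex.grp TopComplex.top TopComplex.tgrp

/-- The subgroup of `n`-cocycles; as a type it carries the subspace topology. -/
def TopComplex.Zsub (A : TopComplex) (n : ℤ) : AddSubgroup (A.X n) := (A.d n).ker

/-- The group of `n`-cocycles, with the subspace topology. -/
abbrev TopComplex.Z (A : TopComplex) (n : ℤ) : Type := A.Zsub n

/-- The differential, corestricted to the cocycles. -/
def TopComplex.dRes (A : TopComplex) (n : ℤ) : A.X n →+ A.Z (n + 1) :=
  (A.d n).codRestrict (A.Zsub (n + 1)) fun x => by
    simp [TopComplex.Zsub, AddMonoidHom.mem_ker, A.d_comp_d]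

/-- The coboundaries, as a subgroup of the cocycles. -/
def TopComplex.Bsub (A : TopComplex) (n : ℤ) : AddSubgroup (A.Z (n + 1)) :=
  (A.dRes n).range

/-- The cohomology group `H^{n+1}(A•) = Z^{n+1}(A•)/Im d^n`, with the quotient
topology (cocycles with the subspace topology, modulo coboundaries). -/
abbrev TopComplex.H (A : TopComplex) (n : ℤ) : Type := A.Z (n + 1) ⧸ A.Bsub n

/-- A continuous chain map of complexes of abelian topological groups. -/
structure ChainMap (A B : TopComplex) where
  f : ∀ n, A.X n →+ B.X n
  cont : ∀ n, Continuous (f n)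
  comm : ∀ n a, f (n + 1) (A.d n a) = B.d n (f n a)

/-- The induced map on cocycles. -/
def ChainMap.Zmap {A B : TopComplex} (φ : ChainMap A B) (n : ℤ) : A.Z n →+ B.Z n :=
  ((φ.f n).comp (A.Zsub n).subtype).codRestrict (B.Zsub n) fun x => by
    have hx : A.d n x.1 = 0 := x.2
    have : B.d n (φ.f n x.1) = φ.f (n + 1) (A.d n x.1) := (φ.comm n x.1).symm
    show B.d n (φ.f n x.1) = 0
    rw [this, hx, map_zero]

/-- The induced map on cohomology. -/
def ChainMap.Hmap {A B : TopComplex} (φ : ChainMap A B) (n : ℤ) : A.H n →+ B.H n :=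
  QuotientAddGroup.map (A.Bsub n) (B.Bsub n) (φ.Zmap (n + 1)) (by
    rintro z ⟨a, rfl⟩
    refine ⟨φ.f n a, ?_⟩
    ext
    exact (φ.comm n a).symm)

/-- A chain map `φ : A• → B•` is quasi-open if for every `n` the map
`Z^n(A•) ⊕ B^{n-1} → Z^n(B•)`, `(a, b) ↦ φ a − d_B b`, is open. -/
def IsQuasiOpen {A B : TopComplex} (φ : ChainMap A B) : Prop :=
  ∀ n : ℤ, IsOpenMap (fun p : A.Z (n + 1) × B.X n =>
    (φ.Zmap (n + 1) p.1 - B.dRes n p.2 : B.Z (n + 1)))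

/-- If a continuous chain map `φ : A• → B•` of complexes of abelian topological
groups is quasi-open, then for every `n` the induced map on cohomology
`H^n(A•) → H^n(B•)` is open (cohomology carries the quotient topology). -/
theorem isOpenMap_Hmap_of_isQuasiOpen {A B : TopComplex} (φ : ChainMap A B)
    (hφ : IsQuasiOpen φ) : ∀ n : ℤ, IsOpenMap (φ.Hmap n) := by
  intro n U hU
  set F : A.Z (n + 1) × B.X n → B.Z (n + 1) :=
    fun p => φ.Zmap (n + 1) p.1 - B.dRes n p.2 with hF
  set W : Set (A.Z (n + 1)) :=
    (QuotientAddGroup.mk : A.Z (n + 1) → A.H n) ⁻¹' U with hW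
  have hWopen : IsOpen W := hU.preimage continuous_quot_mk
  set S : Set (B.Z (n + 1)) := F '' (W ×ˢ Set.univ) with hS
  have hSopen : IsOpen S := hφ n _ (hWopen.prod isOpen_univ)
  have key : (QuotientAddGroup.mk : B.Z (n + 1) → B.H n) ⁻¹' (φ.Hmap n '' U) = S := by
    ext z
    constructor
    · rintro ⟨u, hu, hz⟩
      obtain ⟨a, rfl⟩ := QuotientAddGroup.mk_surjective u
      have hz' : (QuotientAddGroup.mk (φ.Zmap (n + 1) a) : B.H n) = QuotientAddGroup.mk z := by
        simpa [ChainMap.Hmap, QuotientAddGroup.map_mk] using hz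
      have hmem : -(φ.Zmap (n + 1) a) + z ∈ B.Bsub n := (QuotientAddGroup.eq).mp hz'
      obtain ⟨b, hb⟩ := hmem
      refine ⟨(a, -b), ⟨hu, Set.mem_univ _⟩, ?_⟩
      have : B.dRes n b = -(φ.Zmap (n + 1) a) + z := hb
      simp only [hF, map_neg, sub_neg_eq_add, this]
      abel
    · rintro ⟨⟨a, b⟩, ⟨ha, -⟩, rfl⟩
      refine ⟨QuotientAddGroup.mk a, ha, ?_⟩
      show QuotientAddGroup.mk (φ.Zmap (n + 1) a) = _
      refine (QuotientAddGroup.eq).mpr ?_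
      refine ⟨-b, ?_⟩
      simp [hF]
      abel
  have himg : φ.Hmap n '' U = QuotientAddGroup.mk '' S := by
    rw [← key, Set.image_preimage_eq _ QuotientAddGroup.mk_surjective]
  rw [himg]
  exact QuotientAddGroup.isOpenMap_coe S hSopen
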